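/- Let u, v ∈ ℝ^n and suppose every entry of the symmetric matrix A = u·vᵀ + v·uᵀ is nonnegative. Then every eigenvalue of A is at least trace(A) − max_{1≤i≤n} ∑_{1≤j≤n} A_{ij}. -/
import Mathlib

open Real Finset Matrix

private lemma quad_bound {n : ℕ} (u v x : Fin n → ℝ) :
    ((∑ i, u i * v i) - Real.sqrt ((∑ i, u i ^ 2) * (∑ i, v i ^ 2))) * (∑ i, x i ^ 2)
      ≤ 2 * ((∑ i, u i * x i) * (∑ i, v i * x i)) := by
  set S := ∑ i, u i ^ 2 with hSdef
  set T := ∑ i, v i ^ 2 with hTdef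
  set p := ∑ i, u i * v i with hpdef
  set a := ∑ i, u i * x i with hadef
  set b := ∑ i, v i * x i with hbdef
  set X := ∑ i, x i ^ 2 with hXdef
  have hS0 : 0 ≤ S := Finset.sum_nonneg fun i _ => sq_nonneg _
  have hT0 : 0 ≤ T := Finset.sum_nonneg fun i _ => sq_nonneg _
  have hX0 : 0 ≤ X := Finset.sum_nonneg fun i _ => sq_nonneg _
  set s := Real.sqrt S with hsdef
  set t := Real.sqrt T with htdef
  have hs : s ^ 2 = S := Real.sq_sqrt hS0
  have ht : t ^ 2 = T := Real.sq_sqrt hT0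
  have hs0 : 0 ≤ s := Real.sqrt_nonneg _
  have ht0 : 0 ≤ t := Real.sqrt_nonneg _
  have hstm : Real.sqrt (S * T) = s * t := Real.sqrt_mul hS0 T
  rw [hstm]
  have cs1 : (∑ i, (t * u i - s * v i) * x i) ^ 2
      ≤ (∑ i, (t * u i - s * v i) ^ 2) * X :=
    Finset.sum_mul_sq_le_sq_mul_sq _ _ _
  have e1 : (∑ i, (t * u i - s * v i) * x i) = t * a - s * b := by
    rw [hadef, hbdef, Finset.mul_sum, Finset.mul_sum, ← Finset.sum_sub_distrib]
    exact Finset.sum_congr rfl fun i _ => by ring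
  have e2 : (∑ i, (t * u i - s * v i) ^ 2)
      = t ^ 2 * S + s ^ 2 * T - 2 * (t * s) * p := by
    rw [hSdef, hTdef, hpdef, Finset.mul_sum, Finset.mul_sum, Finset.mul_sum,
      ← Finset.sum_add_distrib, ← Finset.sum_sub_distrib]
    exact Finset.sum_congr rfl fun i _ => by ring
  have e2' : (∑ i, (t * u i - s * v i) ^ 2) = 2 * (s * t) ^ 2 - 2 * (s * t) * p := by
    rw [e2, ← hs, ← ht]; ring
  rw [e1, e2'] at cs1
  -- also squared Cauchy–Schwarz for the degenerate case
  have csp : p ^ 2 ≤ S * T := Finset.sum_mul_sq_le_sq_mul_sq _ _ _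
  have csa : a ^ 2 ≤ S * X := Finset.sum_mul_sq_le_sq_mul_sq _ _ _
  have csb : b ^ 2 ≤ T * X := Finset.sum_mul_sq_le_sq_mul_sq _ _ _
  rcases (mul_nonneg hs0 ht0).eq_or_lt with h0 | hpos
  · -- s * t = 0
    have hST : S * T = 0 := by rw [← hs, ← ht, ← mul_pow, ← h0]; norm_num
    have hp0 : p = 0 := by
      have h1 : p ^ 2 ≤ 0 := by rw [← hST]; exact csp
      exact sq_eq_zero_iff.mp (le_antisymm h1 (sq_nonneg p))
    rcases mul_eq_zero.mp hST with h | h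
    · have ha0 : a = 0 := by
        rw [h, zero_mul] at csa
        exact sq_eq_zero_iff.mp (le_antisymm csa (sq_nonneg a))
      rw [hp0, ← h0, ha0]
      simp
    · have hb0 : b = 0 := by
        rw [h, zero_mul] at csb
        exact sq_eq_zero_iff.mp (le_antisymm csb (sq_nonneg b))
      rw [hp0, ← h0, hb0]
      simp
  · have key : 2 * (s * t) * ((p - s * t) * X) ≤ 2 * (s * t) * (2 * (a * b)) := by
      nlinarith [cs1, sq_nonneg (t * a + s * b)]
    exact le_of_mul_le_mul_left key (by positivity)

theorem stmt_4 {n : ℕ} (u v : Fin n → ℝ)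
    (A : Matrix (Fin n) (Fin n) ℝ)
    (hA : A = Matrix.vecMulVec u v + Matrix.vecMulVec v u)
    (hnonneg : ∀ i j, 0 ≤ A i j)
    (mu : ℝ) (x : Fin n → ℝ) (hx : x ≠ 0) (heig : A *ᵥ x = mu • x) :
    A.trace - (⨆ i : Fin n, ∑ j : Fin n, A i j) ≤ mu := by
  rcases Nat.eq_zero_or_pos n with hn | hn
  · subst hn
    exact absurd (funext fun i => i.elim0) hx
  have hAij : ∀ i j, A i j = u i * v j + v i * u j := by
    intro i j; rw [hA]; simp [Matrix.vecMulVec_apply]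
  set p := ∑ i, u i * v i with hpdef
  set S := ∑ i, u i ^ 2 with hSdef
  set T := ∑ i, v i ^ 2 with hTdef
  have hS0 : 0 ≤ S := Finset.sum_nonneg fun i _ => sq_nonneg _
  have hT0 : 0 ≤ T := Finset.sum_nonneg fun i _ => sq_nonneg _
  set s := Real.sqrt S with hsdef
  set t := Real.sqrt T with htdef
  have hs : s ^ 2 = S := Real.sq_sqrt hS0
  have ht : t ^ 2 = T := Real.sq_sqrt hT0
  have hs0 : 0 ≤ s := Real.sqrt_nonneg _
  have ht0 : 0 ≤ t := Real.sqrt_nonneg _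
  have hstm : Real.sqrt (S * T) = s * t := Real.sqrt_mul hS0 T
  -- trace
  have htr : A.trace = 2 * p := by
    rw [Matrix.trace, hpdef, Finset.mul_sum]
    exact Finset.sum_congr rfl fun i _ => by rw [Matrix.diag_apply, hAij]; ring
  -- sup of row sums
  set R := ⨆ i : Fin n, ∑ j : Fin n, A i j with hRdef
  have hRle : ∀ k, (∑ j, A k j) ≤ R := fun k =>
    le_ciSup (f := fun i : Fin n => ∑ j : Fin n, A i j)
      (Finite.bddAbove_range _) k
  have hR0 : 0 ≤ R := by
    refine le_trans ?_ (hRle ⟨0, hn⟩)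
    exact Finset.sum_nonneg fun j _ => hnonneg _ j
  -- Cauchy-Schwarz: |p| ≤ s * t
  have habs : |p| ≤ s * t := by
    rw [← hstm, ← Real.sqrt_sq_eq_abs]
    exact Real.sqrt_le_sqrt (Finset.sum_mul_sq_le_sq_mul_sq _ _ _)
  -- lower bound: p - s * t ≤ mu
  have hXpos : 0 < ∑ i, x i ^ 2 := by
    have hex : ∃ i, x i ≠ 0 := by
      by_contra h; push_neg at h; exact hx (funext h)
    obtain ⟨i, hi⟩ := hex
    have h1 : 0 < x i ^ 2 := by positivity
    exact lt_of_lt_of_le h1 (Finset.single_le_sum (f := fun j => x j ^ 2)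
      (fun j _ => sq_nonneg _) (Finset.mem_univ i))
  have rowAx : ∀ i, (A *ᵥ x) i = u i * (∑ j, v j * x j) + v i * (∑ j, u j * x j) := by
    intro i
    rw [Matrix.mulVec, dotProduct, Finset.mul_sum, Finset.mul_sum,
      ← Finset.sum_add_distrib]
    exact Finset.sum_congr rfl fun j _ => by rw [hAij]; ring
  have hquad : ∑ i, x i * (A *ᵥ x) i
      = 2 * ((∑ i, u i * x i) * (∑ i, v i * x i)) := by
    calc ∑ i, x i * (A *ᵥ x) i
        = ∑ i, ((u i * x i) * (∑ j, v j * x j) + (v i * x i) * (∑ j, u j * x j)) :=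
          Finset.sum_congr rfl fun i _ => by rw [rowAx]; ring
      _ = (∑ i, u i * x i) * (∑ j, v j * x j) + (∑ i, v i * x i) * (∑ j, u j * x j) := by
          rw [Finset.sum_add_distrib, ← Finset.sum_mul, ← Finset.sum_mul]
      _ = 2 * ((∑ i, u i * x i) * (∑ i, v i * x i)) := by ring
  have hquad2 : ∑ i, x i * (A *ᵥ x) i = mu * ∑ i, x i ^ 2 := by
    rw [heig, Finset.mul_sum]
    exact Finset.sum_congr rfl fun i _ => by
      simp [Pi.smul_apply, smul_eq_mul]; ring
  have hlow : p - s * t ≤ mu := by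
    have h1 := quad_bound u v x
    rw [← hpdef, ← hSdef, ← hTdef, hstm, ← hquad, hquad2] at h1
    exact le_of_mul_le_mul_right h1 hXpos
  -- upper bound: p + s * t ≤ R
  have hub : p + s * t ≤ R := by
    set y : Fin n → ℝ := fun i => t * u i + s * v i with hydef
    by_cases hy : y = 0
    · -- degenerate case: p + s * t = 0
      have hzero : p + s * t = 0 := by
        have hyi : ∀ i, t * u i + s * v i = 0 := fun i => congrFun hy i
        have h1 : t * p + s * T = 0 := by
          have : ∀ i, t * (u i * v i) + s * v i ^ 2 = (t * u i + s * v i) * v i :=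
            fun i => by ring
          rw [hpdef, hTdef, Finset.mul_sum, Finset.mul_sum, ← Finset.sum_add_distrib,
            Finset.sum_congr rfl fun i _ => this i]
          simp [hyi]
        rcases eq_or_lt_of_le ht0 with h2 | h2
        · have hT0' : T = 0 := by rw [← ht, ← h2]; ring
          have hst0 : s * t = 0 := by rw [← h2]; ring
          have hp0 : p = 0 := by
            have := habs
            rw [hst0] at this
            have := abs_nonneg p
            linarith [le_antisymm ‹|p| ≤ 0› (abs_nonneg p), abs_eq_zero.mp (le_antisymm ‹|p| ≤ 0› (abs_nonneg p))]
          rw [hp0, hst0]; ring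
        · have : t * (p + s * t) = 0 := by
            have hT' : s * T = s * t ^ 2 := by rw [ht]
            nlinarith [h1]
          have := mul_eq_zero.mp this
          rcases this with h | h
          · exact absurd h (ne_of_gt h2)
          · exact h
      rw [hzero]; exact hR0
    · -- y is an eigenvector for p + s * t
      have hyeig : ∀ i, ∑ j, A i j * y j = (p + s * t) * y i := by
        intro i
        have step : ∀ j, A i j * y j
            = t * u i * (u j * v j) + s * u i * v j ^ 2
              + (t * v i * u j ^ 2 + s * v i * (u j * v j)) := by
          intro j; rw [hAij, hydef]; ring
        rw [Finset.sum_congr rfl fun j _ => step j, Finset.sum_add_distrib,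
          Finset.sum_add_distrib, Finset.sum_add_distrib, ← Finset.mul_sum,
          ← Finset.mul_sum, ← Finset.mul_sum, ← Finset.mul_sum,
          ← hpdef, ← hSdef, ← hTdef, hydef, ← hs, ← ht]
        ring
      obtain ⟨k, -, hk⟩ := Finset.exists_max_image Finset.univ (fun i => |y i|)
        ⟨⟨0, hn⟩, Finset.mem_univ _⟩
      have hyk : 0 < |y k| := by
        have hex : ∃ j, y j ≠ 0 := by
          by_contra h; push_neg at h; exact hy (funext h)
        obtain ⟨j, hj⟩ := hex
        exact lt_of_lt_of_le (abs_pos.mpr hj) (hk j (Finset.mem_univ j))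
      have hpst0 : 0 ≤ p + s * t := by
        have := neg_abs_le p
        linarith [habs]
      have chain : (p + s * t) * |y k| ≤ R * |y k| := by
        calc (p + s * t) * |y k| = |(p + s * t) * y k| := by
              rw [abs_mul, abs_of_nonneg hpst0]
          _ = |∑ j, A k j * y j| := by rw [hyeig k]
          _ ≤ ∑ j, |A k j * y j| := Finset.abs_sum_le_sum_abs _ _
          _ ≤ ∑ j, A k j * |y k| := by
              refine Finset.sum_le_sum fun j _ => ?_
              rw [abs_mul, abs_of_nonneg (hnonneg k j)]
              exact mul_le_mul_of_nonneg_left (hk j (Finset.mem_univ j)) (hnonneg k j)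
          _ = (∑ j, A k j) * |y k| := by rw [Finset.sum_mul]
          _ ≤ R * |y k| := mul_le_mul_of_nonneg_right (hRle k) (abs_nonneg _)
      exact le_of_mul_le_mul_right chain hyk
  rw [htr]
  linarith [hlow, hub]
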